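/- For every real b with b ≥ 4, and every t with 0 ≤ t ≤ (b+2)(b+1)^{2/b}/(12(b+4)): (b − 4t)(1+t)^{4/b} ≥ b − (2(4+b)/b)·t^2 − (4(4−b)(4+b)/(3b^2))·t^3 − ((4−b)(2−b)(4+b)/b^3)·t^4 − (4(4−b)(2−b)(4−3b)/(3b^4))·t^5. -/

import Mathlib

open Real

lemma mono_aux {f f' : ℝ → ℝ} (hd : ∀ s ∈ Set.Ici (0:ℝ), HasDerivAt f (f' s) s)
    (hnn : ∀ s ∈ Set.Ici (0:ℝ), 0 ≤ f' s) {t : ℝ} (ht : 0 ≤ t) : f 0 ≤ f t := by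
  have hmono : MonotoneOn f (Set.Ici (0:ℝ)) := by
    apply monotoneOn_of_deriv_nonneg (convex_Ici 0)
    · exact fun s hs => (hd s hs).continuousAt.continuousWithinAt
    · intro s hs
      rw [interior_Ici] at hs
      exact (hd s (Set.mem_Ici.mpr (le_of_lt hs))).differentiableAt.differentiableWithinAt
    · intro s hs
      rw [interior_Ici] at hs
      rw [(hd s (Set.mem_Ici.mpr (le_of_lt hs))).deriv]
      exact hnn s (Set.mem_Ici.mpr (le_of_lt hs))
  exact hmono (Set.mem_Ici.mpr (le_refl 0)) ht ht

lemma hd_rpow (p : ℝ) (s : ℝ) (hs : (0:ℝ) ≤ s) :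
    HasDerivAt (fun y => (1 + y) ^ p) (p * (1 + s) ^ (p - 1)) s := by
  have h1 : HasDerivAt (fun y : ℝ => 1 + y) 1 s := (hasDerivAt_id s).const_add 1
  have := h1.rpow_const (p := p) (Or.inl (by positivity))
  simpa using this

lemma hd_main (c p a1 a2 a3 a4 : ℝ) (u : ℝ) (hu : (0:ℝ) ≤ u) :
    HasDerivAt (fun y : ℝ => c * (1 + y) ^ p - a1 * y - a2 * y ^ 2 - a3 * y ^ 3 - a4 * y ^ 4)
      (c * p * (1 + u) ^ (p - 1) - a1 - 2 * a2 * u - 3 * a3 * u ^ 2 - 4 * a4 * u ^ 3) u := by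
  have h0 := (hd_rpow p u hu).const_mul c
  have h1 := (hasDerivAt_id u).const_mul a1
  have h2 := (hasDerivAt_pow 2 u).const_mul a2
  have h3 := (hasDerivAt_pow 3 u).const_mul a3
  have h4 := (hasDerivAt_pow 4 u).const_mul a4
  have := (((h0.sub h1).sub h2).sub h3).sub h4
  exact this.congr_deriv (by push_cast; ring)

lemma taylor4 (x : ℝ) (hx0 : 0 < x) (hx1 : x ≤ 1) (t : ℝ) (ht : 0 ≤ t) :
    1 + x * t + x * (x-1) / 2 * t^2 + x * (x-1) * (x-2) / 6 * t^3
      + x * (x-1) * (x-2) * (x-3) / 24 * t^4 ≤ (1 + t) ^ x := by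
  have hc2n : x * (x - 1) ≤ 0 := mul_nonpos_of_nonneg_of_nonpos hx0.le (by linarith)
  have hc3p : 0 ≤ x * (x - 1) * (x - 2) := by
    nlinarith [mul_nonneg (neg_nonneg.2 hc2n) (show (0:ℝ) ≤ 2 - x by linarith)]
  have hc4n : x * (x - 1) * (x - 2) * (x - 3) ≤ 0 := by
    nlinarith [mul_nonneg hc3p (show (0:ℝ) ≤ 3 - x by linarith)]
  -- level 4
  have h4 : ∀ s : ℝ, 0 ≤ s →
      x * (x - 1) * (x - 2) * (x - 3)
        ≤ x * (x - 1) * (x - 2) * (x - 3) * (1 + s) ^ (x - 4) := by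
    intro s hs
    have hle : (1 + s) ^ (x - 4) ≤ 1 :=
      Real.rpow_le_one_of_one_le_of_nonpos (by linarith) (by linarith)
    have := mul_le_mul_of_nonpos_left hle hc4n
    linarith
  -- level 3
  have h3 : ∀ s : ℝ, 0 ≤ s →
      x * (x - 1) * (x - 2) ≤ x * (x - 1) * (x - 2) * (1 + s) ^ (x - 3)
        - x * (x - 1) * (x - 2) * (x - 3) * s := by
    intro s hs
    have key := mono_aux
      (hd := fun u hu => hd_main (x*(x-1)*(x-2)) (x-3) (x*(x-1)*(x-2)*(x-3)) 0 0 0 u hu)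
      (hnn := fun u hu => ?_) hs
    · norm_num [Real.one_rpow] at key
      linarith
    · have := h4 u hu
      have he : x - 3 - 1 = x - 4 := by ring
      rw [he]
      nlinarith [this]
  -- level 2
  have h2 : ∀ s : ℝ, 0 ≤ s →
      x * (x - 1) ≤ x * (x - 1) * (1 + s) ^ (x - 2)
        - x * (x - 1) * (x - 2) * s - x * (x - 1) * (x - 2) * (x - 3) / 2 * s ^ 2 := by
    intro s hs
    have key := mono_aux
      (hd := fun u hu => hd_main (x*(x-1)) (x-2) (x*(x-1)*(x-2))
        (x*(x-1)*(x-2)*(x-3)/2) 0 0 u hu)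
      (hnn := fun u hu => ?_) hs
    · norm_num [Real.one_rpow] at key
      linarith
    · have := h3 u hu
      have he : x - 2 - 1 = x - 3 := by ring
      rw [he]
      nlinarith [this]
  -- level 1
  have h1 : ∀ s : ℝ, 0 ≤ s →
      x ≤ x * (1 + s) ^ (x - 1) - x * (x - 1) * s - x * (x - 1) * (x - 2) / 2 * s ^ 2
        - x * (x - 1) * (x - 2) * (x - 3) / 6 * s ^ 3 := by
    intro s hs
    have key := mono_aux
      (hd := fun u hu => hd_main x (x-1) (x*(x-1)) (x*(x-1)*(x-2)/2)
        (x*(x-1)*(x-2)*(x-3)/6) 0 u hu)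
      (hnn := fun u hu => ?_) hs
    · norm_num [Real.one_rpow] at key
      linarith
    · have := h2 u hu
      have he : x - 1 - 1 = x - 2 := by ring
      rw [he]
      nlinarith [this]
  -- level 0
  have key := mono_aux
    (hd := fun u hu => hd_main 1 x x (x*(x-1)/2) (x*(x-1)*(x-2)/6)
      (x*(x-1)*(x-2)*(x-3)/24) u hu)
    (hnn := fun u hu => ?_) ht
  · norm_num [Real.one_rpow] at key
    linarith
  · have := h1 u hu
    nlinarith [this]

theorem stmt_6 (b t : ℝ) (hb : 4 ≤ b) (ht0 : 0 ≤ t)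
    (ht1 : t ≤ (b + 2) * (b + 1) ^ ((2 : ℝ) / b) / (12 * (b + 4))) :
    b - (2 * (4 + b) / b) * t ^ (2 : ℕ) - (4 * (4 - b) * (4 + b) / (3 * b ^ (2 : ℕ))) * t ^ (3 : ℕ)
      - ((4 - b) * (2 - b) * (4 + b) / b ^ (3 : ℕ)) * t ^ (4 : ℕ)
      - (4 * (4 - b) * (2 - b) * (4 - 3 * b) / (3 * b ^ (4 : ℕ))) * t ^ (5 : ℕ)
    ≤ (b - 4 * t) * (1 + t) ^ ((4 : ℝ) / b) := by
  have hb0 : (0:ℝ) < b := by linarith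
  have hx0 : 0 < (4:ℝ) / b := by positivity
  have hx1 : (4:ℝ) / b ≤ 1 := by rw [div_le_one hb0]; linarith
  have hbt : 0 ≤ b - 4 * t := by
    have h1 : (b + 1) ^ ((2:ℝ)/b) ≤ (b + 1) ^ ((1:ℝ)/2) :=
      Real.rpow_le_rpow_of_exponent_le (by linarith) (by
        rw [div_le_div_iff₀ hb0 (by norm_num)]; linarith)
    have h2 : (b + 1) ^ ((1:ℝ)/2) ≤ (b + 2) / 2 := by
      rw [← Real.sqrt_eq_rpow]
      have : Real.sqrt (b + 1) ≤ Real.sqrt (((b + 2) / 2) ^ 2) :=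
        Real.sqrt_le_sqrt (by nlinarith)
      rwa [Real.sqrt_sq (by linarith)] at this
    have h3 : t ≤ (b + 2) * ((b + 2) / 2) / (12 * (b + 4)) := by
      apply ht1.trans
      apply div_le_div_of_nonneg_right _ (by linarith)
      · exact mul_le_mul_of_nonneg_left (h1.trans h2) (by linarith)
    rw [le_div_iff₀ (show (0:ℝ) < 12 * (b + 4) by linarith)] at h3
    nlinarith [h3]
  have hT := taylor4 ((4:ℝ)/b) hx0 hx1 t ht0
  set x : ℝ := (4:ℝ) / b with hx
  have key : b - (2 * (4 + b) / b) * t ^ (2 : ℕ)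
      - (4 * (4 - b) * (4 + b) / (3 * b ^ (2 : ℕ))) * t ^ (3 : ℕ)
      - ((4 - b) * (2 - b) * (4 + b) / b ^ (3 : ℕ)) * t ^ (4 : ℕ)
      - (4 * (4 - b) * (2 - b) * (4 - 3 * b) / (3 * b ^ (4 : ℕ))) * t ^ (5 : ℕ)
      = (b - 4 * t) * (1 + x * t + x * (x-1) / 2 * t^2 + x * (x-1) * (x-2) / 6 * t^3
        + x * (x-1) * (x-2) * (x-3) / 24 * t^4) := by
    rw [hx]
    field_simp
    ring
  rw [key]
  exact mul_le_mul_of_nonneg_left hT hbt
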